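/- The submodule Submodule.span R {(1 : A)} is a direct summand of the R-module A (i.e. it admits a complementary R-submodule), and the quotient R-module A ⧸ Submodule.span R {(1 : A)} is finitely generated and projective. -/

import Mathlib

theorem aux_phi (R A : Type*) [CommRing R] [IsLocalRing R] [CommRing A] [Algebra R A]
    [Module.Finite R A] [Module.Projective R A] [Nontrivial A] :
    ∃ φ : A →ₗ[R] R, φ 1 = 1 := by
  have fp : Module.FinitePresentation R A := Module.finitePresentation_of_projective R A
  have : Module.Free R A := Module.free_of_flat_of_isLocalRing
  have h1 : (1 : A) ∉ (IsLocalRing.maximalIdeal R) • (⊤ : Submodule R A) := by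
    intro h
    have htop : (⊤ : Submodule R A) ≤ (IsLocalRing.maximalIdeal R) • (⊤ : Submodule R A) := by
      intro a _
      have ha : a = a * 1 := (mul_one a).symm
      rw [ha]
      refine Submodule.smul_induction_on h (fun r hr x _ => ?_) (fun x y hx hy => ?_)
      · rw [mul_smul_comm]
        exact Submodule.smul_mem_smul hr trivial
      · rw [mul_add]; exact add_mem hx hy
    have := Submodule.eq_bot_of_le_smul_of_le_jacobson_bot (IsLocalRing.maximalIdeal R)
      (⊤ : Submodule R A) Module.Finite.fg_top htop
      (by rw [IsLocalRing.jacobson_eq_maximalIdeal ⊥ bot_ne_top])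
    have hz : ∀ a : A, a = 0 := fun a => (Submodule.mem_bot R).mp (this ▸ Submodule.mem_top)
    exact not_subsingleton A (subsingleton_of_forall_eq 0 hz)
  classical
  let b := Module.Free.chooseBasis R A
  have hex : ∃ i, b.repr 1 i ∉ IsLocalRing.maximalIdeal R := by
    by_contra hc
    push_neg at hc
    apply h1
    have := b.linearCombination_repr (1 : A)
    rw [← this]
    rw [Finsupp.linearCombination_apply]
    refine Submodule.sum_mem _ (fun i _ => ?_)
    exact Submodule.smul_mem_smul (hc i) trivial
  obtain ⟨i, hi⟩ := hex
  have hu : IsUnit (b.repr 1 i) := IsLocalRing.notMem_maximalIdeal.mp hi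
  refine ⟨(hu.unit⁻¹ : Rˣ) • b.coord i, ?_⟩
  show (hu.unit⁻¹ : Rˣ) • (b.coord i 1) = 1
  rw [Module.Basis.coord_apply, Units.smul_def, smul_eq_mul]
  exact hu.val_inv_mul

theorem aux_proj (R A : Type*) [CommRing R] [IsLocalRing R] [CommRing A] [Algebra R A]
    [Module.Finite R A] [Module.Projective R A] :
    Module.Projective R (A ⧸ Submodule.span R {(1 : A)}) := by
  rcases subsingleton_or_nontrivial A with h | h
  · have : Subsingleton (A ⧸ Submodule.span R {(1 : A)}) :=
      (Submodule.mkQ_surjective _).subsingleton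
    infer_instance
  · obtain ⟨φ, hφ⟩ := aux_phi R A
    set N := Submodule.span R {(1 : A)} with hN
    let p : A →ₗ[R] A := (LinearMap.toSpanSingleton R A 1).comp φ
    have hp : ∀ a, p a = φ a • 1 := fun a => rfl
    have hpp : ∀ a, p (p a) = p a := by
      intro a
      rw [hp, hp, map_smul, hφ, smul_eq_mul, mul_one]
    have hrange : ∀ a, p a ∈ N :=
      fun a => Submodule.smul_mem _ _ (Submodule.mem_span_singleton_self 1)
    let f : A →ₗ[R] N := p.codRestrict N hrange
    have hf : ∀ x : N, f x = x := by
      rintro ⟨x, hx⟩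
      obtain ⟨r, rfl⟩ := Submodule.mem_span_singleton.mp hx
      ext
      show p (r • 1) = r • 1
      rw [hp, map_smul, smul_eq_mul, hφ, mul_one]
    have hc : IsCompl N (LinearMap.ker f) := LinearMap.isCompl_of_proj hf
    have hkerf : LinearMap.ker f = LinearMap.ker p := LinearMap.ker_codRestrict N p hrange
    have hmem : ∀ x : A, ((LinearMap.id : A →ₗ[R] A) - p) x ∈ LinearMap.ker p := fun x => by
      rw [LinearMap.mem_ker, LinearMap.sub_apply, LinearMap.id_apply, map_sub, hpp, sub_self]
    let s : A →ₗ[R] LinearMap.ker p := ((LinearMap.id : A →ₗ[R] A) - p).codRestrict (LinearMap.ker p) hmem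
    have hs : s.comp (LinearMap.ker p).subtype = LinearMap.id := by
      apply LinearMap.ext
      intro x
      apply Subtype.ext
      show (x : A) - p (x : A) = (x : A)
      rw [LinearMap.mem_ker.mp x.2, sub_zero]
    have hker : Module.Projective R (LinearMap.ker p) :=
      Module.Projective.of_split (LinearMap.ker p).subtype s hs
    rw [hkerf] at hc
    exact Module.Projective.of_equiv (Submodule.quotientEquivOfIsCompl N _ hc).symm

/-- Let `A` be a commutative `R`-algebra that is finitely generated and
projective as an `R`-module. Then `Submodule.span R {1}` is a direct summand of the `R`-module
`A` (it admits a complementary submodule), and the quotient `A ⧸ R·1` is a finitely generated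
projective `R`-module. -/
theorem stmt5 (R A : Type*) [CommRing R] [CommRing A] [Algebra R A]
    [Module.Finite R A] [Module.Projective R A] :
    (∃ N : Submodule R A, IsCompl (Submodule.span R {(1 : A)}) N) ∧
    Module.Finite R (A ⧸ Submodule.span R {(1 : A)}) ∧
    Module.Projective R (A ⧸ Submodule.span R {(1 : A)}) := by
  have fpA : Module.FinitePresentation R A := Module.finitePresentation_of_projective R A
  have hfg : (Submodule.span R {(1 : A)}).FG := Submodule.fg_span_singleton _
  have fpQ : Module.FinitePresentation R (A ⧸ Submodule.span R {(1 : A)}) :=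
    Module.finitePresentation_of_surjective (Submodule.span R {(1 : A)}).mkQ
      (Submodule.mkQ_surjective _) (by rwa [Submodule.ker_mkQ])
  have projQ : Module.Projective R (A ⧸ Submodule.span R {(1 : A)}) := by
    refine Module.projective_of_localization_maximal' (fun P _ => Localization.AtPrime P)
      (fun P _ => LocalizedModule P.primeCompl A ⧸
        (Submodule.span R {(1 : A)}).localized P.primeCompl)
      (fun P _ => (Submodule.span R {(1 : A)}).toLocalizedQuotient P.primeCompl) ?_
    intro I hI
    haveI : Module.Finite (Localization.AtPrime I) (LocalizedModule I.primeCompl A) :=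
      Module.Finite.of_isLocalizedModule I.primeCompl (LocalizedModule.mkLinearMap I.primeCompl A)
    haveI : Module.Projective (Localization.AtPrime I) (LocalizedModule I.primeCompl A) :=
      Module.projective_of_isLocalizedModule I.primeCompl
        (LocalizedModule.mkLinearMap I.primeCompl A)
    have hloc : (Submodule.span R {(1 : A)}).localized I.primeCompl
        = Submodule.span (Localization.AtPrime I)
            {(1 : LocalizedModule I.primeCompl A)} := by
      rw [Submodule.localized, Submodule.localized'_span, Set.image_singleton]
      with_unfolding_all rfl
    show Module.Projective (Localization.AtPrime I)
      (LocalizedModule I.primeCompl A ⧸ (Submodule.span R {(1 : A)}).localized I.primeCompl)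
    letI : Algebra (Localization.AtPrime I) (LocalizedModule I.primeCompl A) :=
      Algebra.ofModule
        (fun r x y => by
          refine Localization.induction_on r (fun ⟨a, s⟩ => ?_)
          induction x, y using LocalizedModule.induction_on₂ with | _ m t n u => _
          simp only [LocalizedModule.mk_smul_mk, LocalizedModule.mk_mul_mk, smul_mul_assoc, mul_assoc])
        (fun r x y => by
          refine Localization.induction_on r (fun ⟨a, s⟩ => ?_)
          induction x, y using LocalizedModule.induction_on₂ with | _ m t n u => _
          simp only [LocalizedModule.mk_smul_mk, LocalizedModule.mk_mul_mk, mul_smul_comm, mul_left_comm])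
    exact (congrArg (fun N' : Submodule (Localization.AtPrime I) (LocalizedModule I.primeCompl A)
        => Module.Projective (Localization.AtPrime I) (LocalizedModule I.primeCompl A ⧸ N'))
      hloc).mpr (aux_proj (Localization.AtPrime I) (LocalizedModule I.primeCompl A))
  refine ⟨?_, inferInstance, projQ⟩
  set N := Submodule.span R {(1 : A)} with hN
  obtain ⟨g, hg⟩ := Module.projective_lifting_property N.mkQ
    LinearMap.id (Submodule.mkQ_surjective _)
  have h2 : ∀ y, N.mkQ (g y) = y := fun y => by
    simpa using congrArg (fun h => h y) hg
  have hmem : ∀ x : A, ((LinearMap.id : A →ₗ[R] A) - g ∘ₗ N.mkQ) x ∈ N := fun x => by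
    show x - g (N.mkQ x) ∈ N
    rw [← Submodule.Quotient.mk_eq_zero, ← Submodule.mkQ_apply, map_sub, h2, sub_self]
  let f : A →ₗ[R] N := ((LinearMap.id : A →ₗ[R] A) - g ∘ₗ N.mkQ).codRestrict N hmem
  have hf : ∀ x : N, f x = x := by
    intro x
    apply Subtype.ext
    show (x : A) - g (N.mkQ x) = (x : A)
    have hx : N.mkQ (x : A) = 0 := by
      rw [Submodule.mkQ_apply, Submodule.Quotient.mk_eq_zero]
      exact x.2
    rw [hx, map_zero, sub_zero]
  exact ⟨LinearMap.ker f, LinearMap.isCompl_of_proj hf⟩
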